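/- Assume (C, E, s) is an n-exangulated category in which, for every object X, the morphism X → 0 is a trivial inflation and the morphism 0 → X is a trivial deflation; for each object X fix a distinguished n-exangle X → 0 → ⋯ → 0 → ΣX ⇢(δ_X). Then for all objects X₀, Y₀ of C the maps C(X₀, Y₀) → E(ΣX₀, Y₀), f ↦ f_* δ_{X₀}, and C(ΣX₀, ΣY₀) → E(ΣX₀, Y₀), g ↦ g* δ_{Y₀}, are isomorphisms of abelian groups. -/

import Mathlib

/-!
Common definitions: complexes of length `n+2`, `n`-exangulated categories
(Herschend–Liu–Nakaoka), and `(n+2)`-angulated categories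
(Geiss–Keller–Oppermann), formalized from scratch.
-/

open CategoryTheory CategoryTheory.Limits Opposite ZeroObject

universe v u

namespace Paper

/-- A complex concentrated in degrees `0, …, n+1`.  Only the objects in degrees
`0, …, n+1` and the differentials `d 0, …, d n` carry information; all objects in
higher degrees are required to be zero. -/
structure ExCpx (n : ℕ) (C : Type u) [Category.{v} C] [Preadditive C] [HasZeroObject C] where
  obj : ℕ → C
  d : ∀ i, obj i ⟶ obj (i + 1)
  dd : ∀ i, i + 1 ≤ n → d i ≫ d (i + 1) = 0
  isZero_of_gt : ∀ i, n + 1 < i → IsZero (obj i)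

variable {C : Type u} [Category.{v} C] [Preadditive C] [HasZeroObject C] [HasFiniteBiproducts C] [HasBinaryBiproducts C]

/-- Morphisms of complexes of length `n+2`. -/
structure CpxHom {n : ℕ} (X Y : ExCpx n C) where
  f : ∀ i, X.obj i ⟶ Y.obj i
  comm : ∀ i, i ≤ n → X.d i ≫ f (i + 1) = f i ≫ Y.d i

/-- The identity morphism of a complex. -/
def CpxHom.id {n : ℕ} (X : ExCpx n C) : CpxHom X X :=
  ⟨fun _ => 𝟙 _, fun i _ => by simp⟩

/-- Composition of morphisms of complexes. -/
def CpxHom.comp {n : ℕ} {X Y Z : ExCpx n C} (φ : CpxHom X Y) (ψ : CpxHom Y Z) : CpxHom X Z :=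
  ⟨fun i => φ.f i ≫ ψ.f i, fun i hi => by
    rw [← Category.assoc, φ.comm i hi, Category.assoc, ψ.comm i hi, ← Category.assoc]⟩

/-- Chain homotopy between two morphisms of complexes of length `n+2`,
for complexes concentrated in degrees `0, …, n+1`. -/
def Homotopic (n : ℕ) {X Y : ExCpx n C} (φ ψ : CpxHom X Y) : Prop :=
  ∃ h : ∀ i, X.obj (i + 1) ⟶ Y.obj i,
    (φ.f 0 - ψ.f 0 = X.d 0 ≫ h 0) ∧
    (∀ i, i + 1 ≤ n → φ.f (i + 1) - ψ.f (i + 1) = X.d (i + 1) ≫ h (i + 1) + h i ≫ Y.d i) ∧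
    (φ.f (n + 1) - ψ.f (n + 1) = h n ≫ Y.d n)

/-- Homotopy equivalence of complexes which is the identity on the two end terms. -/
def FixedEndsHtpyEquiv (n : ℕ) (X Y : ExCpx n C) (h0 : X.obj 0 = Y.obj 0)
    (h1 : X.obj (n + 1) = Y.obj (n + 1)) : Prop :=
  ∃ (u : CpxHom X Y) (v : CpxHom Y X),
    u.f 0 = eqToHom h0 ∧ u.f (n + 1) = eqToHom h1 ∧
    v.f 0 = eqToHom h0.symm ∧ v.f (n + 1) = eqToHom h1.symm ∧
    Homotopic n (u.comp v) (CpxHom.id X) ∧ Homotopic n (v.comp u) (CpxHom.id Y)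

/-- `EE E B A` is the abelian group `E(B, A)` of `E`-extensions. -/
abbrev EE (E : Cᵒᵖ ⥤ C ⥤ AddCommGrpCat.{v}) (B A : C) : Type v := (E.obj (op B)).obj A

/-- Covariant action `f_* δ` of `E` on extensions. -/
def push {E : Cᵒᵖ ⥤ C ⥤ AddCommGrpCat.{v}} {B A A' : C} (f : A ⟶ A') (δ : EE E B A) :
    EE E B A' := ((E.obj (op B)).map f) δ

/-- Contravariant action `g^* δ` of `E` on extensions. -/
def pull {E : Cᵒᵖ ⥤ C ⥤ AddCommGrpCat.{v}} {B B' A : C} (g : B' ⟶ B) (δ : EE E B A) :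
    EE E B' A := ((E.map g.op).app A) δ

/-- Transport of extensions along equalities of objects. -/
def castE {E : Cᵒᵖ ⥤ C ⥤ AddCommGrpCat.{v}} {B B' A A' : C} (hB : B = B') (hA : A = A')
    (δ : EE E B A) : EE E B' A' := by subst hB; subst hA; exact δ

/-- The type of a "distinguished `n`-exangle" predicate. -/
def DistType (n : ℕ) (C : Type u) [Category.{v} C] [Preadditive C] [HasZeroObject C]
    (E : Cᵒᵖ ⥤ C ⥤ AddCommGrpCat.{v}) : Type (max u v) :=
  ∀ X : ExCpx n C, EE E (X.obj (n + 1)) (X.obj 0) → Prop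

/-- `f` is an inflation: it appears as the `0`-th differential of some
distinguished `n`-exangle. -/
def InflationOf {n : ℕ} {E : Cᵒᵖ ⥤ C ⥤ AddCommGrpCat.{v}} (D : DistType n C E)
    {A B : C} (f : A ⟶ B) : Prop :=
  ∃ (X : ExCpx n C) (δ : EE E (X.obj (n + 1)) (X.obj 0)) (h0 : X.obj 0 = A) (h1 : X.obj 1 = B),
    D X δ ∧ X.d 0 = eqToHom h0 ≫ f ≫ eqToHom h1.symm

/-- `f` is a deflation: it appears as the `n`-th differential of some
distinguished `n`-exangle. -/
def DeflationOf {n : ℕ} {E : Cᵒᵖ ⥤ C ⥤ AddCommGrpCat.{v}} (D : DistType n C E)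
    {A B : C} (f : A ⟶ B) : Prop :=
  ∃ (X : ExCpx n C) (δ : EE E (X.obj (n + 1)) (X.obj 0)) (h0 : X.obj n = A)
    (h1 : X.obj (n + 1) = B),
    D X δ ∧ X.d n = eqToHom h0 ≫ f ≫ eqToHom h1.symm

/-- The mapping cone of a morphism of complexes whose `0`-th component is
(an identity up to equality of objects):
`X₁ → X₂ ⊕ Y₁ → ⋯ → X_{n+1} ⊕ Yₙ → Y_{n+1}` with the usual matrix differentials. -/
def IsMappingCone (n : ℕ) {X Y : ExCpx n C} (φ : CpxHom X Y) (M : ExCpx n C) : Prop :=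
  ∃ (e0 : M.obj 0 = X.obj 1) (etop : M.obj (n + 1) = Y.obj (n + 1))
    (emid : ∀ i, 1 ≤ i → i ≤ n → M.obj i = ((X.obj (i + 1)) ⊞ (Y.obj i))),
    (∀ hn : 1 ≤ n,
      M.d 0 = eqToHom e0 ≫ biprod.lift (-(X.d 1)) (φ.f 1) ≫ eqToHom (emid 1 le_rfl hn).symm) ∧
    (∀ i (h1 : 1 ≤ i) (h2 : i + 1 ≤ n),
      M.d i = eqToHom (emid i (by omega) (by omega)) ≫
        biprod.desc (biprod.lift (-(X.d (i + 1))) (φ.f (i + 1))) (biprod.lift 0 (Y.d i)) ≫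
        eqToHom (emid (i + 1) (by omega) (by omega)).symm) ∧
    (∀ hn : 1 ≤ n,
      M.d n = eqToHom (emid n hn le_rfl) ≫ biprod.desc (φ.f (n + 1)) (Y.d n) ≫ eqToHom etop.symm)

/-- The mapping cocone of a morphism of complexes whose `(n+1)`-st component is
(an identity up to equality of objects):
`X₀ → Y₀ ⊕ X₁ → ⋯ → Y_{n-1} ⊕ Xₙ → Yₙ`. -/
def IsMappingCocone (n : ℕ) {X Y : ExCpx n C} (φ : CpxHom X Y) (M : ExCpx n C) : Prop :=
  ∃ (e0 : M.obj 0 = X.obj 0) (etop : M.obj (n + 1) = Y.obj n)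
    (emid : ∀ i, i + 1 ≤ n → M.obj (i + 1) = ((Y.obj i) ⊞ (X.obj (i + 1)))),
    (∀ hn : 1 ≤ n,
      M.d 0 = eqToHom e0 ≫ biprod.lift (φ.f 0) (X.d 0) ≫ eqToHom (emid 0 hn).symm) ∧
    (∀ i (h2 : i + 2 ≤ n),
      M.d (i + 1) = eqToHom (emid i (by omega)) ≫
        biprod.desc (biprod.lift (-(Y.d i)) 0) (biprod.lift (φ.f (i + 1)) (X.d (i + 1))) ≫
        eqToHom (emid (i + 1) (by omega)).symm) ∧
    (∀ i (hi : i + 1 = n),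
      M.d (i + 1) = eqToHom (emid i hi.le) ≫
        biprod.desc (-(Y.d i) ≫ eqToHom (show Y.obj (i + 1) = Y.obj n by rw [hi]))
          (φ.f (i + 1) ≫ eqToHom (show Y.obj (i + 1) = Y.obj n by rw [hi])) ≫
        eqToHom (show Y.obj n = M.obj (i + 2) by subst hi; exact etop.symm))

/-- An `n`-exangulated structure `(𝔼, 𝔰)` on an additive category `C`:
`Dist X δ` says that `⟨X, δ⟩` is a distinguished `n`-exangle (i.e. `𝔰(δ) = [X]`),
together with all the axioms of Herschend–Liu–Nakaoka: `𝔰` is an exact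
realization ((R0), (R1), (R2), realizing every extension, with values in
homotopy classes of complexes with fixed end terms) satisfying (EA1), (EA2)
and (EA2op). -/
structure NExStruct (n : ℕ) (C : Type u) [Category.{v} C] [Preadditive C] [HasZeroObject C]
    [HasFiniteBiproducts C] [HasBinaryBiproducts C] (E : Cᵒᵖ ⥤ C ⥤ AddCommGrpCat.{v}) : Type (max u v) where
  Dist : DistType n C E
  /-- every extension is realized by some distinguished `n`-exangle -/
  realize : ∀ {A B : C} (δ : EE E B A),
    ∃ (X : ExCpx n C) (h0 : X.obj 0 = A) (h1 : X.obj (n + 1) = B),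
      Dist X (castE h1.symm h0.symm δ)
  /-- distinguished `n`-exangles are `E`-attached complexes -/
  attached_push : ∀ (X : ExCpx n C) (δ : EE E (X.obj (n + 1)) (X.obj 0)),
    Dist X δ → push (X.d 0) δ = 0
  attached_pull : ∀ (X : ExCpx n C) (δ : EE E (X.obj (n + 1)) (X.obj 0)),
    Dist X δ → pull (X.d n) δ = 0
  /-- the realization takes values in homotopy equivalence classes: closure -/
  dist_htpy : ∀ (X Y : ExCpx n C) (h0 : X.obj 0 = Y.obj 0) (h1 : X.obj (n + 1) = Y.obj (n + 1))
    (δ : EE E (X.obj (n + 1)) (X.obj 0)),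
    Dist X δ → FixedEndsHtpyEquiv n X Y h0 h1 → Dist Y (castE h1 h0 δ)
  /-- the realization takes values in homotopy equivalence classes: uniqueness -/
  dist_unique : ∀ (X Y : ExCpx n C) (h0 : X.obj 0 = Y.obj 0) (h1 : X.obj (n + 1) = Y.obj (n + 1))
    (δ : EE E (X.obj (n + 1)) (X.obj 0)),
    Dist X δ → Dist Y (castE h1 h0 δ) → FixedEndsHtpyEquiv n X Y h0 h1
  /-- (R0): morphisms of extensions lift to morphisms of the realizing complexes -/
  liftMor : ∀ (X Y : ExCpx n C) (δ : EE E (X.obj (n + 1)) (X.obj 0))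
    (ρ : EE E (Y.obj (n + 1)) (Y.obj 0)) (a : X.obj 0 ⟶ Y.obj 0)
    (c : X.obj (n + 1) ⟶ Y.obj (n + 1)),
    Dist X δ → Dist Y ρ → push a δ = pull c ρ →
    ∃ φ : CpxHom X Y, φ.f 0 = a ∧ φ.f (n + 1) = c
  /-- (R1), contravariant exactness at the middle terms -/
  exact_contra_mid : ∀ (X : ExCpx n C) (δ : EE E (X.obj (n + 1)) (X.obj 0)), Dist X δ →
    ∀ (W : C) (i : ℕ), i + 1 ≤ n → ∀ g : W ⟶ X.obj (i + 1),
      g ≫ X.d (i + 1) = 0 → ∃ h : W ⟶ X.obj i, h ≫ X.d i = g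
  /-- (R1), contravariant exactness at the last term -/
  exact_contra_top : ∀ (X : ExCpx n C) (δ : EE E (X.obj (n + 1)) (X.obj 0)), Dist X δ →
    ∀ (W : C) (g : W ⟶ X.obj (n + 1)), pull g δ = 0 → ∃ h : W ⟶ X.obj n, h ≫ X.d n = g
  /-- (R1), covariant exactness at the middle terms -/
  exact_cov_mid : ∀ (X : ExCpx n C) (δ : EE E (X.obj (n + 1)) (X.obj 0)), Dist X δ →
    ∀ (W : C) (i : ℕ), i + 1 ≤ n → ∀ g : X.obj (i + 1) ⟶ W,
      X.d i ≫ g = 0 → ∃ h : X.obj (i + 2) ⟶ W, X.d (i + 1) ≫ h = g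
  /-- (R1), covariant exactness at the first term -/
  exact_cov_bot : ∀ (X : ExCpx n C) (δ : EE E (X.obj (n + 1)) (X.obj 0)), Dist X δ →
    ∀ (W : C) (g : X.obj 0 ⟶ W), push g δ = 0 → ∃ h : X.obj 1 ⟶ W, X.d 0 ≫ h = g
  /-- (R2): the zero extension `0 ∈ E(0, A)` is realized by the trivial complex -/
  r2 : ∀ A : C, ∃ X : ExCpx n C, X.obj 0 = A ∧ IsIso (X.d 0) ∧
    (∀ i, 2 ≤ i → IsZero (X.obj i)) ∧ Dist X 0
  /-- (R2), dual: the zero extension `0 ∈ E(A, 0)` is realized by the trivial complex -/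
  r2op : ∀ A : C, ∃ X : ExCpx n C, X.obj (n + 1) = A ∧ IsIso (X.d n) ∧
    (∀ i, i + 1 ≤ n → IsZero (X.obj i)) ∧ Dist X 0
  /-- (EA1): compositions of inflations are inflations -/
  ea1_infl : ∀ {A B D : C} (f : A ⟶ B) (g : B ⟶ D),
    InflationOf Dist f → InflationOf Dist g → InflationOf Dist (f ≫ g)
  /-- (EA1): compositions of deflations are deflations -/
  ea1_defl : ∀ {A B D : C} (f : A ⟶ B) (g : B ⟶ D),
    DeflationOf Dist f → DeflationOf Dist g → DeflationOf Dist (f ≫ g)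
  /-- (EA2): good lifts exist -/
  ea2 : ∀ (X Y : ExCpx n C) (h0 : Y.obj 0 = X.obj 0) (ρ : EE E (Y.obj (n + 1)) (Y.obj 0))
    (c : X.obj (n + 1) ⟶ Y.obj (n + 1)),
    Dist Y ρ → Dist X (castE rfl h0 (pull c ρ)) →
    ∃ φ : CpxHom X Y, φ.f 0 = eqToHom h0.symm ∧ φ.f (n + 1) = c ∧
      ∃ (M : ExCpx n C) (hM0 : M.obj 0 = X.obj 1) (hMtop : M.obj (n + 1) = Y.obj (n + 1)),
        IsMappingCone n φ M ∧
        Dist M (castE hMtop.symm hM0.symm (push (eqToHom h0 ≫ X.d 0) ρ))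
  /-- (EA2op): dually, good lifts exist -/
  ea2op : ∀ (X Y : ExCpx n C) (htop : Y.obj (n + 1) = X.obj (n + 1))
    (ρ : EE E (Y.obj (n + 1)) (Y.obj 0)) (a : Y.obj 0 ⟶ X.obj 0),
    Dist Y ρ → Dist X (castE htop rfl (push a ρ)) →
    ∃ φ : CpxHom Y X, φ.f 0 = a ∧ φ.f (n + 1) = eqToHom htop ∧
      ∃ (M : ExCpx n C) (hM0 : M.obj 0 = Y.obj 0) (hMtop : M.obj (n + 1) = X.obj n),
        IsMappingCocone n φ M ∧
        Dist M (castE hMtop.symm hM0.symm (pull (X.d n ≫ eqToHom htop.symm) ρ))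

/-- The morphism `A → 0` is a trivial inflation: it embeds in a distinguished
`n`-exangle `A → 0 → ⋯ → 0 → Y ⇢ δ`. -/
def TrivialInflation {n : ℕ} {E : Cᵒᵖ ⥤ C ⥤ AddCommGrpCat.{v}} (σ : NExStruct n C E)
    (A : C) : Prop :=
  ∃ (X : ExCpx n C) (δ : EE E (X.obj (n + 1)) (X.obj 0)),
    σ.Dist X δ ∧ X.obj 0 = A ∧ ∀ i, 1 ≤ i → i ≤ n → IsZero (X.obj i)

/-- The morphism `0 → A` is a trivial deflation: it embeds in a distinguished
`n`-exangle `Z → 0 → ⋯ → 0 → A ⇢ δ`. -/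
def TrivialDeflation {n : ℕ} {E : Cᵒᵖ ⥤ C ⥤ AddCommGrpCat.{v}} (σ : NExStruct n C E)
    (A : C) : Prop :=
  ∃ (X : ExCpx n C) (δ : EE E (X.obj (n + 1)) (X.obj 0)),
    σ.Dist X δ ∧ X.obj (n + 1) = A ∧ ∀ i, 1 ≤ i → i ≤ n → IsZero (X.obj i)

/-- An `(n+2)`-`Σ`-sequence `A₀ → A₁ → ⋯ → A_{n+1} → Σ A₀`. -/
structure AngSeq (n : ℕ) (C : Type u) [Category.{v} C] (S : C ⥤ C) where
  obj : ℕ → C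
  d : ∀ i, obj i ⟶ obj (i + 1)
  last : obj (n + 1) ⟶ S.obj (obj 0)

/-- A morphism of `(n+2)`-`Σ`-sequences. -/
structure AngHom {n : ℕ} {S : C ⥤ C} (T T' : AngSeq n C S) where
  f : ∀ i, T.obj i ⟶ T'.obj i
  comm : ∀ i, i ≤ n → T.d i ≫ f (i + 1) = f i ≫ T'.d i
  comm_last : T.last ≫ S.map (f 0) = f (n + 1) ≫ T'.last

/-- `T` and `T'` are isomorphic `(n+2)`-`Σ`-sequences. -/
def IsIsoSeq (n : ℕ) {S : C ⥤ C} (T T' : AngSeq n C S) : Prop :=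
  ∃ φ : AngHom T T', ∀ i, i ≤ n + 1 → IsIso (φ.f i)

/-- `Z` is a direct sum of the `(n+2)`-`Σ`-sequences `X` and `Y`. -/
def IsDirectSumSeq (n : ℕ) {S : C ⥤ C} (Z X Y : AngSeq n C S) : Prop :=
  ∃ (p : AngHom Z X) (q : AngHom Z Y) (ix : AngHom X Z) (iy : AngHom Y Z),
    (∀ i, i ≤ n + 1 → ix.f i ≫ p.f i = 𝟙 _) ∧ (∀ i, i ≤ n + 1 → iy.f i ≫ q.f i = 𝟙 _) ∧
    (∀ i, i ≤ n + 1 → ix.f i ≫ q.f i = 0) ∧ (∀ i, i ≤ n + 1 → iy.f i ≫ p.f i = 0) ∧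
    (∀ i, i ≤ n + 1 → p.f i ≫ ix.f i + q.f i ≫ iy.f i = 𝟙 _)

/-- `R` is the left rotation of the `(n+2)`-`Σ`-sequence `T`. -/
def IsLeftRotation (n : ℕ) {S : C ⥤ C} (T R : AngSeq n C S) : Prop :=
  ∃ (e : ∀ i, i ≤ n → R.obj i = T.obj (i + 1)) (etop : R.obj (n + 1) = S.obj (T.obj 0)),
    (∀ i (hi : i + 1 ≤ n), R.d i = eqToHom (e i (by omega)) ≫ T.d (i + 1) ≫
      eqToHom (e (i + 1) hi).symm) ∧
    (R.d n = eqToHom (e n le_rfl) ≫ T.last ≫ eqToHom etop.symm) ∧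
    (R.last = eqToHom etop ≫ (((-1 : ℤ) ^ n) • S.map (T.d 0)) ≫
      eqToHom (congrArg S.obj (e 0 (Nat.zero_le n))).symm)

/-- `M` is the mapping cone of the morphism `Φ` of `(n+2)`-`Σ`-sequences. -/
def IsMappingConeSeq (n : ℕ) {S : C ⥤ C} {T T' : AngSeq n C S} (Φ : AngHom T T')
    (M : AngSeq n C S) : Prop :=
  ∃ (e : ∀ i, i ≤ n → M.obj i = ((T.obj (i + 1)) ⊞ (T'.obj i)))
    (etop : M.obj (n + 1) = ((S.obj (T.obj 0)) ⊞ (T'.obj (n + 1)))),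
    (∀ i (hi : i + 1 ≤ n), M.d i = eqToHom (e i (by omega)) ≫
        biprod.desc (biprod.lift (-(T.d (i + 1))) (Φ.f (i + 1))) (biprod.lift 0 (T'.d i)) ≫
        eqToHom (e (i + 1) hi).symm) ∧
    (M.d n = eqToHom (e n le_rfl) ≫
        biprod.desc (biprod.lift (-(T.last)) (Φ.f (n + 1))) (biprod.lift 0 (T'.d n)) ≫
        eqToHom etop.symm) ∧
    (M.last = eqToHom etop ≫
        biprod.desc ((-(S.map (T.d 0) ≫ S.map biprod.inl)) + (S.map (Φ.f 0) ≫ S.map biprod.inr))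
          (T'.last ≫ S.map biprod.inr) ≫
        eqToHom (congrArg S.obj (e 0 (Nat.zero_le n))).symm)

/-- An `(n+2)`-angulated structure `(Σ, Θ)` on an additive category `C`
(Geiss–Keller–Oppermann): `Σ = S` is an auto-equivalence, `Θ = Theta` is a class of
`(n+2)`-`Σ`-sequences satisfying the axioms (N1)–(N4). -/
structure NAngStruct (n : ℕ) (C : Type u) [Category.{v} C] [Preadditive C] [HasZeroObject C]
    [HasFiniteBiproducts C] [HasBinaryBiproducts C] (S : C ⥤ C) : Type (max u v) where
  /-- `Σ` is an auto-equivalence -/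
  eqv : S.IsEquivalence
  Theta : AngSeq n C S → Prop
  /-- (N1)(a): closed under isomorphisms -/
  iso_closed : ∀ T T' : AngSeq n C S, Theta T → IsIsoSeq n T T' → Theta T'
  /-- (N1)(a): closed under direct sums -/
  sum_closed : ∀ Z X Y : AngSeq n C S, Theta X → Theta Y → IsDirectSumSeq n Z X Y → Theta Z
  /-- (N1)(a): closed under direct summands -/
  summand_closed : ∀ Z X Y : AngSeq n C S, Theta Z → IsDirectSumSeq n Z X Y → Theta X
  /-- (N1)(b): trivial sequences belong to `Theta` -/
  trivial_mem : ∀ T : AngSeq n C S, IsIso (T.d 0) →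
    (∀ i, 2 ≤ i → i ≤ n + 1 → IsZero (T.obj i)) → Theta T
  /-- (N1)(c): every morphism extends to an `(n+2)`-angle -/
  extend_mor : ∀ {A B : C} (f : A ⟶ B), ∃ T : AngSeq n C S, Theta T ∧
    ∃ (h0 : T.obj 0 = A) (h1 : T.obj 1 = B), T.d 0 = eqToHom h0 ≫ f ≫ eqToHom h1.symm
  /-- (N2): `Theta` is closed under left rotation -/
  rot : ∀ T R : AngSeq n C S, IsLeftRotation n T R → Theta T → Theta R
  /-- (N2): `Theta` is closed under right rotation -/
  rot_inv : ∀ T R : AngSeq n C S, IsLeftRotation n T R → Theta R → Theta T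
  /-- (N3): commutative squares extend to morphisms of `(n+2)`-angles -/
  n3 : ∀ T T' : AngSeq n C S, Theta T → Theta T' →
    ∀ (φ0 : T.obj 0 ⟶ T'.obj 0) (φ1 : T.obj 1 ⟶ T'.obj 1), T.d 0 ≫ φ1 = φ0 ≫ T'.d 0 →
      ∃ Φ : AngHom T T', Φ.f 0 = φ0 ∧ Φ.f 1 = φ1
  /-- (N4): the fillers can be chosen so that the mapping cone belongs to `Theta` -/
  n4 : ∀ T T' : AngSeq n C S, Theta T → Theta T' →
    ∀ (φ0 : T.obj 0 ⟶ T'.obj 0) (φ1 : T.obj 1 ⟶ T'.obj 1), T.d 0 ≫ φ1 = φ0 ≫ T'.d 0 →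
      ∃ Φ : AngHom T T', Φ.f 0 = φ0 ∧ Φ.f 1 = φ1 ∧
        ∃ M : AngSeq n C S, IsMappingConeSeq n Φ M ∧ Theta M

/-- The `(n+2)`-angulated structure `α` on `C` is `E`-compatible with the
`n`-exangulated structure `σ`: every `(n+2)`-angle, viewed as a complex, is a
distinguished `n`-exangle for some extension `δ`. -/
def ECompatible {n : ℕ} {E : Cᵒᵖ ⥤ C ⥤ AddCommGrpCat.{v}} (σ : NExStruct n C E)
    {S : C ⥤ C} (α : NAngStruct n C S) : Prop :=
  ∀ T : AngSeq n C S, α.Theta T →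
    ∃ (X : ExCpx n C) (h : ∀ i, i ≤ n + 1 → X.obj i = T.obj i),
      (∀ i (hi : i ≤ n), X.d i = eqToHom (h i (by omega)) ≫ T.d i ≫
        eqToHom (h (i + 1) (by omega)).symm) ∧
      ∃ δ : EE E (X.obj (n + 1)) (X.obj 0), σ.Dist X δ

/-- The realization `𝔯` of the bifunctor `E¹ = C(-, Σ-)` induced by the chosen
distinguished `n`-exangles `X → 0 → ⋯ → 0 → ΣX ⇢ δ_X`:
`𝔯(ε) := 𝔰(ε^* δ_{X₀})`, i.e. `⟨X, ε⟩` is `𝔯`-distinguished iff `⟨X, ε^* δ_{X₀}⟩`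
is `𝔰`-distinguished. -/
def DistR {n : ℕ} {E : Cᵒᵖ ⥤ C ⥤ AddCommGrpCat.{v}} (σ : NExStruct n C E) (F : C ⥤ C)
    (δ : ∀ X : C, EE E (F.obj X) X) :
    ∀ X : ExCpx n C, (X.obj (n + 1) ⟶ F.obj (X.obj 0)) → Prop :=
  fun X ε => σ.Dist X (pull ε (δ (X.obj 0)))

/-- Inflations with respect to a hom-valued (i.e. `E¹ = C(-, Σ-)`-valued)
distinguished-`n`-exangle predicate. -/
def HInflationOf {n : ℕ} (F : C ⥤ C)
    (R : ∀ X : ExCpx n C, (X.obj (n + 1) ⟶ F.obj (X.obj 0)) → Prop)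
    {A B : C} (f : A ⟶ B) : Prop :=
  ∃ (X : ExCpx n C) (ε : X.obj (n + 1) ⟶ F.obj (X.obj 0)) (h0 : X.obj 0 = A)
    (h1 : X.obj 1 = B), R X ε ∧ X.d 0 = eqToHom h0 ≫ f ≫ eqToHom h1.symm

/-- Deflations with respect to a hom-valued distinguished-`n`-exangle predicate. -/
def HDeflationOf {n : ℕ} (F : C ⥤ C)
    (R : ∀ X : ExCpx n C, (X.obj (n + 1) ⟶ F.obj (X.obj 0)) → Prop)
    {A B : C} (f : A ⟶ B) : Prop :=
  ∃ (X : ExCpx n C) (ε : X.obj (n + 1) ⟶ F.obj (X.obj 0)) (h0 : X.obj n = A)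
    (h1 : X.obj (n + 1) = B), R X ε ∧ X.d n = eqToHom h0 ≫ f ≫ eqToHom h1.symm

set_option linter.unusedSectionVars false

section Helpers

variable {n : ℕ} {E : Cᵒᵖ ⥤ C ⥤ AddCommGrpCat.{v}}
variable [∀ X : Cᵒᵖ, (E.obj X).Additive] [E.Additive]

theorem push_id {B A : C} (δ : EE E B A) : push (𝟙 A) δ = δ := by
  simp [push]

theorem pull_id {B A : C} (δ : EE E B A) : pull (𝟙 B) δ = δ := by
  simp [pull]

theorem push_comp {B A A' A'' : C} (f : A ⟶ A') (g : A' ⟶ A'') (δ : EE E B A) :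
    push (f ≫ g) δ = push g (push f δ) := by
  simp [push, Functor.map_comp]

theorem pull_comp {B'' B' B A : C} (f : B'' ⟶ B') (g : B' ⟶ B) (δ : EE E B A) :
    pull (f ≫ g) δ = pull f (pull g δ) := by
  simp [pull, op_comp, Functor.map_comp]

theorem push_pull {B B' A A' : C} (g : B' ⟶ B) (f : A ⟶ A') (δ : EE E B A) :
    push f (pull g δ) = pull g (push f δ) := by
  have h2 := ConcreteCategory.congr_hom ((E.map g.op).naturality f) δ
  simp only [comp_apply] at h2
  simp only [push, pull]
  exact h2.symm

theorem push_zero_mor {B A A' : C} (δ : EE E B A) : push (0 : A ⟶ A') δ = 0 := by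
  simp [push, Functor.map_zero]

theorem pull_zero_mor {B B' A : C} (δ : EE E B A) : pull (0 : B' ⟶ B) δ = 0 := by
  have : ((0 : B' ⟶ B)).op = 0 := by simp
  simp [pull, this, Functor.map_zero]

theorem push_add_mor {B A A' : C} (f g : A ⟶ A') (δ : EE E B A) :
    push (f + g) δ = push f δ + push g δ := by
  simp [push, Functor.map_add]

theorem pull_add_mor {B B' A : C} (f g : B' ⟶ B) (δ : EE E B A) :
    pull (f + g) δ = pull f δ + pull g δ := by
  have h : ((f + g)).op = f.op + g.op := by simp
  simp [pull, h, Functor.map_add, NatTrans.app_add]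

theorem push_zero {B A A' : C} (f : A ⟶ A') : push f (0 : EE E B A) = 0 := by
  simp [push]

theorem pull_zero {B B' A : C} (g : B' ⟶ B) : pull g (0 : EE E B A) = 0 := by
  simp [pull]

theorem push_addval {B A A' : C} (f : A ⟶ A') (x y : EE E B A) :
    push f (x + y) = push f x + push f y := by simp [push]

theorem pull_addval {B B' A : C} (g : B' ⟶ B) (x y : EE E B A) :
    pull g (x + y) = pull g x + pull g y := by simp [pull]

theorem castE_eq {B B' A A' : C} (hB : B = B') (hA : A = A') (δ : EE E B A) :
    castE hB hA δ = push (eqToHom hA) (pull (eqToHom hB.symm) δ) := by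
  subst hB; subst hA; simp [castE, push_id, pull_id]

theorem castE_castE {B B' B'' A A' A'' : C} (h1 : B = B') (k1 : A = A') (h2 : B' = B'')
    (k2 : A' = A'') (δ : EE E B A) :
    castE h2 k2 (castE h1 k1 δ) = castE (h1.trans h2) (k1.trans k2) δ := by
  subst h1 h2 k1 k2; rfl

theorem castE_rfl {B A : C} (δ : EE E B A) : castE rfl rfl δ = δ := rfl

theorem castE_symm_eq {B B' A A' : C} (hB : B = B') (hA : A = A') (δ : EE E B A)
    (ρ : EE E B' A') (h : castE hB hA δ = ρ) : δ = castE hB.symm hA.symm ρ := by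
  subst hB hA; exact h

theorem castE_zero {B B' A A' : C} (hB : B = B') (hA : A = A') :
    castE hB hA (0 : EE E B A) = 0 := by subst hB hA; rfl

theorem subsingleton_EE_right {B A : C} (hA : IsZero A) : Subsingleton (EE E B A) := by
  have hA' : (𝟙 A : A ⟶ A) = 0 := hA.eq_of_src _ _
  have h : IsZero ((E.obj (op B)).obj A) := by
    rw [IsZero.iff_id_eq_zero, ← CategoryTheory.Functor.map_id, hA',
      CategoryTheory.Functor.map_zero]
  constructor
  intro x y
  have h1 : (𝟙 ((E.obj (op B)).obj A) : _ ⟶ _) = 0 := h.eq_of_src _ _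
  calc x = (𝟙 ((E.obj (op B)).obj A) : _ ⟶ _) x := by simp
    _ = (0 : (E.obj (op B)).obj A ⟶ _) x := by rw [h1]
    _ = (0 : (E.obj (op B)).obj A ⟶ _) y := by simp
    _ = (𝟙 ((E.obj (op B)).obj A) : _ ⟶ _) y := by rw [h1]
    _ = y := by simp

theorem subsingleton_EE_left {B A : C} (hB : IsZero B) : Subsingleton (EE E B A) := by
  have hop : (𝟙 (op B) : _ ⟶ _) = 0 := by
    have h0 : (𝟙 B : B ⟶ B) = 0 := hB.eq_of_src _ _
    rw [← op_id, h0]; simp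
  have h2 : IsZero (E.obj (op B)) := by
    rw [IsZero.iff_id_eq_zero, ← CategoryTheory.Functor.map_id, hop,
      CategoryTheory.Functor.map_zero]
  have h : IsZero ((E.obj (op B)).obj A) := by
    rw [IsZero.iff_id_eq_zero]
    have h1 : (𝟙 (E.obj (op B)) : _ ⟶ _) = 0 := h2.eq_of_src _ _
    have h3 := congrArg (fun (η : E.obj (op B) ⟶ E.obj (op B)) => η.app A) h1
    simpa using h3
  constructor
  intro x y
  have h1 : (𝟙 ((E.obj (op B)).obj A) : _ ⟶ _) = 0 := h.eq_of_src _ _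
  calc x = (𝟙 ((E.obj (op B)).obj A) : _ ⟶ _) x := by simp
    _ = (0 : (E.obj (op B)).obj A ⟶ _) x := by rw [h1]
    _ = (0 : (E.obj (op B)).obj A ⟶ _) y := by simp
    _ = (𝟙 ((E.obj (op B)).obj A) : _ ⟶ _) y := by rw [h1]
    _ = y := by simp

theorem lift_comp_eq {P Q Z W : C} (f : W ⟶ P) (g : W ⟶ Q) (h : P ⊞ Q ⟶ Z) :
    biprod.lift f g ≫ h = f ≫ (biprod.inl ≫ h) + g ≫ (biprod.inr ≫ h) := by
  conv_lhs => rw [show h = biprod.desc (biprod.inl ≫ h) (biprod.inr ≫ h) from by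
    apply biprod.hom_ext' <;> simp]
  rw [biprod.lift_desc]

theorem comp_desc_eq {P Q Z W : C} (f : P ⟶ Z) (g : Q ⟶ Z) (h : W ⟶ P ⊞ Q) :
    h ≫ biprod.desc f g = (h ≫ biprod.fst) ≫ f + (h ≫ biprod.snd) ≫ g := by
  conv_lhs => rw [show h = biprod.lift (h ≫ biprod.fst) (h ≫ biprod.snd) from by
    apply biprod.hom_ext <;> simp]
  rw [biprod.lift_desc]

end Helpers

section Helpers2
set_option linter.unusedSectionVars false

variable {n : ℕ} {E : Cᵒᵖ ⥤ C ⥤ AddCommGrpCat.{v}}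
variable [∀ X : Cᵒᵖ, (E.obj X).Additive] [E.Additive]

theorem castE_id {B A : C} (h : B = B) (k : A = A) (δ : EE E B A) : castE h k δ = δ := rfl

theorem castE_split {B B' A A' : C} (hB : B = B') (hA : A = A') (δ : EE E B A) :
    castE hB hA δ = castE hB rfl (castE rfl hA δ) := by subst hB hA; rfl

theorem push_castE_left {B B' A A' : C} (hB : B = B') (f : A ⟶ A') (δ : EE E B A) :
    push f (castE hB rfl δ) = castE hB rfl (push f δ) := by subst hB; rfl

theorem pull_castE_right {B B' A A' : C} (hA : A = A') (g : B' ⟶ B) (δ : EE E B A) :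
    pull g (castE rfl hA δ) = castE rfl hA (pull g δ) := by subst hA; rfl

theorem push_castE_right {B A₀ A₁ A₂ : C} (hA : A₀ = A₁) (f : A₁ ⟶ A₂) (δ : EE E B A₀) :
    push f (castE rfl hA δ) = push (eqToHom hA ≫ f) δ := by
  subst hA; rw [castE_id]; simp

theorem pull_castE_left {B₀ B₁ B₂ A : C} (hB : B₀ = B₁) (g : B₂ ⟶ B₁) (δ : EE E B₀ A) :
    pull g (castE hB rfl δ) = pull (g ≫ eqToHom hB.symm) δ := by
  subst hB; rw [castE_id]; simp

theorem pull_castE_left' {B₀ B₁ B₂ A : C} (hB : B₀ = B₁) (k : A = A) (g : B₂ ⟶ B₁)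
    (δ : EE E B₀ A) : pull g (castE hB k δ) = pull (g ≫ eqToHom hB.symm) δ := by
  subst hB; rw [castE_id]; simp

theorem push_castE_right' {B A₀ A₁ A₂ : C} (k : B = B) (hA : A₀ = A₁) (f : A₁ ⟶ A₂)
    (δ : EE E B A₀) : push f (castE k hA δ) = push (eqToHom hA ≫ f) δ := by
  subst hA; rw [castE_id]; simp

theorem push_eqToHom {B A A' : C} (h : A = A') (δ : EE E B A) :
    push (eqToHom h) δ = castE rfl h δ := by subst h; simp [push_id]; rfl

theorem pull_eqToHom {B B' A : C} (h : B' = B) (δ : EE E B A) :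
    pull (eqToHom h) δ = castE h.symm rfl δ := by subst h; simp [pull_id]; rfl

end Helpers2

section Inj
set_option linter.unusedSectionVars false

variable {n : ℕ} {E : Cᵒᵖ ⥤ C ⥤ AddCommGrpCat.{v}}
variable [∀ X : Cᵒᵖ, (E.obj X).Additive] [E.Additive]

theorem push_inj (σ : NExStruct n C E) {A SA : C} (T : ExCpx n C)
    (hT0 : T.obj 0 = A) (hT1 : T.obj (n + 1) = SA) (hTz1 : IsZero (T.obj 1))
    (δA : EE E SA A) (hTd : σ.Dist T (castE hT1.symm hT0.symm δA))
    (W : C) (f : A ⟶ W) (hf : push f δA = 0) : f = 0 := by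
  have h : push (eqToHom hT0 ≫ f) (castE hT1.symm hT0.symm δA) = 0 := by
    rw [castE_split, push_castE_left, push_castE_right]
    simp only [eqToHom_trans_assoc, eqToHom_refl, Category.id_comp]
    rw [hf, castE_zero]
  obtain ⟨h1, hh1⟩ := σ.exact_cov_bot T _ hTd W (eqToHom hT0 ≫ f) h
  have hz : h1 = 0 := hTz1.eq_of_src h1 0
  rw [hz, Limits.comp_zero] at hh1
  have h2 := congrArg (fun k => eqToHom hT0.symm ≫ k) hh1.symm
  simpa using h2

theorem pull_inj (σ : NExStruct n C E) {A SA : C} (T : ExCpx n C)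
    (hT0 : T.obj 0 = A) (hT1 : T.obj (n + 1) = SA) (hTzn : IsZero (T.obj n))
    (δA : EE E SA A) (hTd : σ.Dist T (castE hT1.symm hT0.symm δA))
    (W : C) (g : W ⟶ SA) (hg : pull g δA = 0) : g = 0 := by
  have h : pull (g ≫ eqToHom hT1.symm) (castE hT1.symm hT0.symm δA) = 0 := by
    rw [castE_split, pull_castE_left]
    simp only [Category.assoc, eqToHom_trans, eqToHom_refl, Category.comp_id]
    rw [pull_castE_right, hg, castE_zero]
  obtain ⟨h1, hh1⟩ := σ.exact_contra_top T _ hTd W (g ≫ eqToHom hT1.symm) h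
  have hz : h1 = 0 := hTzn.eq_of_tgt h1 0
  rw [hz, Limits.zero_comp] at hh1
  have h2 := congrArg (fun k => k ≫ eqToHom hT1) hh1.symm
  simpa using h2

end Inj

section Surj
set_option linter.unusedSectionVars false
set_option maxHeartbeats 1000000

variable {n : ℕ} {E : Cᵒᵖ ⥤ C ⥤ AddCommGrpCat.{v}}
variable [∀ X : Cᵒᵖ, (E.obj X).Additive] [E.Additive]

theorem push_surj (σ : NExStruct n C E) (hn : 1 ≤ n) {A SA : C} (T : ExCpx n C)
    (hT0 : T.obj 0 = A) (hT1 : T.obj (n + 1) = SA) (hTzn : IsZero (T.obj n))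
    (δA : EE E SA A) (hTd : σ.Dist T (castE hT1.symm hT0.symm δA))
    (W : C) (ε : EE E SA W) : ∃ f : A ⟶ W, push f δA = ε := by
  -- the auxiliary extension τ = (ι_A)_* δA + (ι_W)_* ε on A ⊞ W
  set τ : EE E SA (A ⊞ W) :=
    push (biprod.inl : A ⟶ A ⊞ W) δA + push (biprod.inr : W ⟶ A ⊞ W) ε with hτdef
  have hfst : push (biprod.fst : A ⊞ W ⟶ A) τ = δA := by
    rw [hτdef, push_addval, ← push_comp, ← push_comp, biprod.inl_fst, biprod.inr_fst, push_id,
      push_zero_mor, add_zero]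
  have hsnd : push (biprod.snd : A ⊞ W ⟶ W) τ = ε := by
    rw [hτdef, push_addval, ← push_comp, ← push_comp, biprod.inl_snd, biprod.inr_snd, push_id,
      push_zero_mor, zero_add]
  obtain ⟨R, hR0, hR1, hRd⟩ := σ.realize τ
  have htop : R.obj (n + 1) = T.obj (n + 1) := hR1.trans hT1.symm
  -- the morphism a : R₀ ⟶ T₀ induced by the first projection
  set a : R.obj 0 ⟶ T.obj 0 := eqToHom hR0 ≫ biprod.fst ≫ eqToHom hT0.symm with hadef
  have hpa : push a (castE hR1.symm hR0.symm τ) = castE hR1.symm hT0.symm δA := by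
    rw [castE_split, hadef, push_comp, push_castE_left, push_castE_right]
    simp only [eqToHom_trans, eqToHom_refl, push_id]
    rw [push_comp, push_castE_left, hfst, push_castE_left, push_eqToHom, ← castE_split]
  have hTd' : σ.Dist T (castE htop rfl (push a (castE hR1.symm hR0.symm τ))) := by
    rw [hpa, castE_castE]
    exact hTd
  obtain ⟨φ, hφ0, hφtop, M, hM0, hMtop, hcoc, hMd⟩ :=
    σ.ea2op T R htop (castE hR1.symm hR0.symm τ) a hRd hTd'
  have hMzero : IsZero (M.obj (n + 1)) := by rw [hMtop]; exact hTzn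
  have hsub := subsingleton_EE_left (E := E) (A := M.obj 0) hMzero
  have hμ : castE hMtop.symm hM0.symm
      (pull (T.d n ≫ eqToHom htop.symm) (castE hR1.symm hR0.symm τ)) = 0 := hsub.elim _ _
  obtain ⟨r, hr⟩ := σ.exact_cov_bot M _ hMd (M.obj 0) (𝟙 (M.obj 0)) (by rw [hμ, push_zero])
  obtain ⟨e0, etop, emid, hc1, -, -⟩ := hcoc
  have hd0 : M.d 0 = eqToHom e0 ≫ biprod.lift (φ.f 0) (R.d 0) ≫ eqToHom (emid 0 hn).symm :=
    hc1 hn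
  -- the retraction splits into two components
  have hsplit : a ≫ (biprod.inl ≫ eqToHom (emid 0 hn).symm ≫ r ≫ eqToHom e0) +
      R.d 0 ≫ (biprod.inr ≫ eqToHom (emid 0 hn).symm ≫ r ≫ eqToHom e0) = 𝟙 (R.obj 0) := by
    have h1 := hr
    rw [hd0, hφ0] at h1
    have h2 := congrArg (fun k => eqToHom e0.symm ≫ k ≫ eqToHom e0) h1
    simp only [Category.assoc, eqToHom_trans, eqToHom_refl, Category.comp_id,
      Category.id_comp, eqToHom_trans_assoc] at h2
    rw [← lift_comp_eq]
    simpa using h2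
  -- push the splitting onto ρ := castE _ _ τ
  have h4 : push (R.d 0 ≫ (biprod.inr ≫ eqToHom (emid 0 hn).symm ≫ r ≫ eqToHom e0))
      (castE hR1.symm hR0.symm τ) = 0 := by
    rw [push_comp, σ.attached_push R _ hRd, push_zero]
  have h5 : push (a ≫ (biprod.inl ≫ eqToHom (emid 0 hn).symm ≫ r ≫ eqToHom e0))
      (castE hR1.symm hR0.symm τ) =
      push (biprod.inl ≫ eqToHom (emid 0 hn).symm ≫ r ≫ eqToHom e0)
        (push a (castE hR1.symm hR0.symm τ)) := push_comp _ _ _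
  have hρeq : castE hR1.symm hR0.symm τ =
      push (biprod.inl ≫ eqToHom (emid 0 hn).symm ≫ r ≫ eqToHom e0)
        (castE hR1.symm hT0.symm δA) := by
    have h3 := congrArg (fun k => push k (castE hR1.symm hR0.symm τ)) hsplit
    rw [push_add_mor, h4, add_zero, h5, push_id, hpa] at h3
    exact h3.symm
  have hτback : castE hR1 hR0 (castE hR1.symm hR0.symm τ) = τ := by
    rw [castE_castE]; exact castE_id _ _ _
  refine ⟨eqToHom hT0.symm ≫ (biprod.inl ≫ eqToHom (emid 0 hn).symm ≫ r ≫ eqToHom e0) ≫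
    eqToHom hR0 ≫ biprod.snd, ?_⟩
  have hfin : ε = push (eqToHom hT0.symm ≫ (biprod.inl ≫ eqToHom (emid 0 hn).symm ≫ r ≫
      eqToHom e0) ≫ eqToHom hR0 ≫ biprod.snd) δA := by
    rw [← hsnd, ← hτback, hρeq]
    rw [castE_split (hB := hR1.symm) (hA := hT0.symm), push_castE_left]
    rw [castE_split (hB := hR1) (hA := hR0), push_castE_left, push_castE_right,
      push_castE_left, castE_castE, castE_id, ← push_comp, push_castE_right]
  exact hfin.symm

end Surj

section Surj2
set_option linter.unusedSectionVars false
set_option maxHeartbeats 1000000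

variable {n : ℕ} {E : Cᵒᵖ ⥤ C ⥤ AddCommGrpCat.{v}}
variable [∀ X : Cᵒᵖ, (E.obj X).Additive] [E.Additive]

theorem pull_surj (σ : NExStruct n C E) (hn : 1 ≤ n) {A SA : C} (T : ExCpx n C)
    (hT0 : T.obj 0 = A) (hT1 : T.obj (n + 1) = SA) (hTz1 : IsZero (T.obj 1))
    (δA : EE E SA A) (hTd : σ.Dist T (castE hT1.symm hT0.symm δA))
    (W : C) (ε : EE E W A) : ∃ g : W ⟶ SA, pull g δA = ε := by
  -- the auxiliary extension τ = (π_SA)^* δA + (π_W)^* ε on SA ⊞ W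
  set τ : EE E (SA ⊞ W) A :=
    pull (biprod.fst : SA ⊞ W ⟶ SA) δA + pull (biprod.snd : SA ⊞ W ⟶ W) ε with hτdef
  have hinl : pull (biprod.inl : SA ⟶ SA ⊞ W) τ = δA := by
    rw [hτdef, pull_addval, ← pull_comp, ← pull_comp, biprod.inl_fst, biprod.inl_snd, pull_id,
      pull_zero_mor, add_zero]
  have hinr : pull (biprod.inr : W ⟶ SA ⊞ W) τ = ε := by
    rw [hτdef, pull_addval, ← pull_comp, ← pull_comp, biprod.inr_fst, biprod.inr_snd, pull_id,
      pull_zero_mor, zero_add]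
  obtain ⟨R, hR0, hR1, hRd⟩ := σ.realize τ
  have h0 : R.obj 0 = T.obj 0 := hR0.trans hT0.symm
  -- the morphism c : Ttop ⟶ Rtop induced by the first injection
  set c : T.obj (n + 1) ⟶ R.obj (n + 1) := eqToHom hT1 ≫ biprod.inl ≫ eqToHom hR1.symm
    with hcdef
  have hpc : pull c (castE hR1.symm hR0.symm τ) = castE hT1.symm hR0.symm δA := by
    rw [castE_split, hcdef, pull_castE_left]
    simp only [Category.assoc, eqToHom_trans, eqToHom_refl, Category.comp_id]
    rw [pull_comp, pull_castE_right, hinl, pull_castE_right, pull_eqToHom, castE_castE]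
  have hTd' : σ.Dist T (castE rfl h0 (pull c (castE hR1.symm hR0.symm τ))) := by
    rw [hpc, castE_castE]
    exact hTd
  obtain ⟨φ, hφ0, hφtop, M, hM0, hMtop, hcone, hMd⟩ :=
    σ.ea2 T R h0 (castE hR1.symm hR0.symm τ) c hRd hTd'
  have hMzero : IsZero (M.obj 0) := by rw [hM0]; exact hTz1
  have hsub := subsingleton_EE_right (E := E) (B := M.obj (n + 1)) hMzero
  have hμ : castE hMtop.symm hM0.symm
      (push (eqToHom h0 ≫ T.d 0) (castE hR1.symm hR0.symm τ)) = 0 := hsub.elim _ _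
  obtain ⟨s, hs⟩ := σ.exact_contra_top M _ hMd (M.obj (n + 1)) (𝟙 (M.obj (n + 1)))
    (by rw [hμ, pull_zero])
  obtain ⟨e0, etop, emid, -, -, hk3⟩ := hcone
  have hdn : M.d n = eqToHom (emid n hn le_rfl) ≫ biprod.desc (φ.f (n + 1)) (R.d n) ≫
      eqToHom etop.symm := hk3 hn
  -- the section splits into two components
  have hsplit : ((eqToHom etop.symm ≫ s ≫ eqToHom (emid n hn le_rfl)) ≫ biprod.fst) ≫ c +
      ((eqToHom etop.symm ≫ s ≫ eqToHom (emid n hn le_rfl)) ≫ biprod.snd) ≫ R.d n =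
      𝟙 (R.obj (n + 1)) := by
    rw [← comp_desc_eq]
    have h1 := hs
    rw [hdn, hφtop] at h1
    have h2 := congrArg (fun k => eqToHom etop.symm ≫ k ≫ eqToHom etop) h1
    simp only [Category.assoc, eqToHom_trans, eqToHom_refl, Category.comp_id,
      Category.id_comp, eqToHom_trans_assoc] at h2
    simpa [Category.assoc] using h2
  have h4 : pull (((eqToHom etop.symm ≫ s ≫ eqToHom (emid n hn le_rfl)) ≫ biprod.snd) ≫ R.d n)
      (castE hR1.symm hR0.symm τ) = 0 := by
    rw [pull_comp, σ.attached_pull R _ hRd, pull_zero]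
  have h5 : pull (((eqToHom etop.symm ≫ s ≫ eqToHom (emid n hn le_rfl)) ≫ biprod.fst) ≫ c)
      (castE hR1.symm hR0.symm τ) =
      pull ((eqToHom etop.symm ≫ s ≫ eqToHom (emid n hn le_rfl)) ≫ biprod.fst)
        (pull c (castE hR1.symm hR0.symm τ)) := pull_comp _ _ _
  have hρeq : castE hR1.symm hR0.symm τ =
      pull ((eqToHom etop.symm ≫ s ≫ eqToHom (emid n hn le_rfl)) ≫ biprod.fst)
        (castE hT1.symm hR0.symm δA) := by
    have h3 := congrArg (fun k => pull k (castE hR1.symm hR0.symm τ)) hsplit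
    rw [pull_add_mor, h4, add_zero, h5, pull_id, hpc] at h3
    exact h3.symm
  have hτback : castE hR1 hR0 (castE hR1.symm hR0.symm τ) = τ := by
    rw [castE_castE]; exact castE_id _ _ _
  refine ⟨(biprod.inr ≫ eqToHom hR1.symm) ≫
    ((eqToHom etop.symm ≫ s ≫ eqToHom (emid n hn le_rfl)) ≫ biprod.fst) ≫ eqToHom hT1, ?_⟩
  have hfin : ε = pull ((biprod.inr ≫ eqToHom hR1.symm) ≫
      ((eqToHom etop.symm ≫ s ≫ eqToHom (emid n hn le_rfl)) ≫ biprod.fst) ≫ eqToHom hT1) δA := by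
    rw [← hinr, ← hτback, hρeq]
    rw [castE_split (hB := hT1.symm) (hA := hR0.symm), pull_castE_left]
    rw [pull_castE_right, castE_castE, pull_castE_left', ← pull_comp]
  exact hfin.symm

end Surj2
theorem statement_3 {C : Type u} [Category.{v} C] [Preadditive C] [HasZeroObject C]
    [HasFiniteBiproducts C] [HasBinaryBiproducts C]
    (E : Cᵒᵖ ⥤ C ⥤ AddCommGrpCat.{v}) [∀ X : Cᵒᵖ, (E.obj X).Additive] [E.Additive]
    (n : ℕ) (hn : 0 < n) (σ : NExStruct n C E)
    (htriv : ∀ X : C, TrivialInflation σ X ∧ TrivialDeflation σ X)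
    (Sg : C → C) (cpx : C → ExCpx n C)
    (hc0 : ∀ X : C, (cpx X).obj 0 = X) (hctop : ∀ X : C, (cpx X).obj (n + 1) = Sg X)
    (hmid : ∀ (X : C) (i : ℕ), 1 ≤ i → i ≤ n → IsZero ((cpx X).obj i))
    (δ : ∀ X : C, EE E (Sg X) X)
    (hdist : ∀ X : C, σ.Dist (cpx X) (castE (hctop X).symm (hc0 X).symm (δ X))) :
    ∀ X₀ Y₀ : C,
      (∃ e : (X₀ ⟶ Y₀) ≃+ EE E (Sg X₀) Y₀, ∀ f : X₀ ⟶ Y₀, e f = push f (δ X₀)) ∧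
      (∃ e' : (Sg X₀ ⟶ Sg Y₀) ≃+ EE E (Sg X₀) Y₀, ∀ g : Sg X₀ ⟶ Sg Y₀, e' g = pull g (δ Y₀)) := by
  intro X₀ Y₀
  have hn1 : 1 ≤ n := hn
  constructor
  · -- the covariant map f ↦ f_* δ_{X₀}
    have hbij : Function.Bijective
        (AddMonoidHom.mk' (fun f : X₀ ⟶ Y₀ => push f (δ X₀))
          (fun f g => push_add_mor f g (δ X₀))) := by
      constructor
      · rw [injective_iff_map_eq_zero]
        intro f hf
        exact push_inj σ (cpx X₀) (hc0 X₀) (hctop X₀) (hmid X₀ 1 le_rfl hn1) (δ X₀)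
          (hdist X₀) Y₀ f hf
      · intro ε
        exact push_surj σ hn1 (cpx X₀) (hc0 X₀) (hctop X₀) (hmid X₀ n hn1 le_rfl) (δ X₀)
          (hdist X₀) Y₀ ε
    exact ⟨AddEquiv.ofBijective _ hbij, fun f => rfl⟩
  · -- the contravariant map g ↦ g^* δ_{Y₀}
    have hbij : Function.Bijective
        (AddMonoidHom.mk' (fun g : Sg X₀ ⟶ Sg Y₀ => pull g (δ Y₀))
          (fun f g => pull_add_mor f g (δ Y₀))) := by
      constructor
      · rw [injective_iff_map_eq_zero]
        intro g hg
        exact pull_inj σ (cpx Y₀) (hc0 Y₀) (hctop Y₀) (hmid Y₀ n hn1 le_rfl) (δ Y₀)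
          (hdist Y₀) (Sg X₀) g hg
      · intro ε
        exact pull_surj σ hn1 (cpx Y₀) (hc0 Y₀) (hctop Y₀) (hmid Y₀ 1 le_rfl hn1) (δ Y₀)
          (hdist Y₀) (Sg X₀) ε
    exact ⟨AddEquiv.ofBijective _ hbij, fun g => rfl⟩

end Paper
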